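/- The function g(x) = 3x/((1+2x)(1-x)) - log((1+2x)/(1-x)) on (0,1) satisfies: g'(x) vanishes in (0,1) exactly at x = 1/4, g is strictly decreasing on (0, 1/4) and strictly increasing on (1/4, 1), lim_{x→0⁺} g(x) = 0, and lim_{x→1⁻} g(x) = +∞. Consequently g has a unique root s in (0,1), and s ∈ (1/4, 1). -/

import Mathlib

open Real Set Filter

noncomputable def gfun : ℝ → ℝ := fun x =>
  3*x/((1 + 2*x)*(1 - x)) - Real.log ((1 + 2*x)/(1 - x))

lemma gfun_hasDerivAt (x : ℝ) (h1 : -(1/2) < x) (h2 : x < 1) :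
    HasDerivAt gfun (3*x*(4*x - 1)/(((1 + 2*x)*(1 - x))^2)) x := by
  have h3 : (0:ℝ) < 1 + 2*x := by linarith
  have h4 : (0:ℝ) < 1 - x := by linarith
  have hD : (1 + 2*x)*(1 - x) ≠ 0 := by positivity
  have hq : (1 + 2*x)/(1 - x) ≠ 0 := by positivity
  have hb1 : HasDerivAt (fun x : ℝ => 1 + 2*x) 2 x := by
    simpa using ((hasDerivAt_id x).const_mul 2).const_add 1
  have hb2 : HasDerivAt (fun x : ℝ => 1 - x) (-1) x := by
    exact (hasDerivAt_id x).const_sub 1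
  have hA : HasDerivAt (fun x : ℝ => 3*x) 3 x := by
    simpa using (hasDerivAt_id x).const_mul 3
  have hB : HasDerivAt (fun x : ℝ => (1 + 2*x)*(1 - x)) (2*(1-x) + (1+2*x)*(-1)) x :=
    hb1.mul hb2
  have hdiv := hA.div hB hD
  have hqd := hb1.div hb2 h4.ne'
  have hlog := hqd.log hq
  have := hdiv.sub hlog
  refine this.congr_deriv ?_
  simp only [Pi.div_apply]
  field_simp
  ring

lemma gfun_continuousAt (x : ℝ) (h1 : -(1/2) < x) (h2 : x < 1) : ContinuousAt gfun x :=
  (gfun_hasDerivAt x h1 h2).continuousAt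

lemma gfun_zero : gfun 0 = 0 := by simp [gfun]

lemma gfun_anti : StrictAntiOn gfun (Icc 0 (1/4)) := by
  apply strictAntiOn_of_deriv_neg (convex_Icc _ _)
  · intro x hx
    exact (gfun_continuousAt x (by linarith [hx.1]) (by linarith [hx.2])).continuousWithinAt
  · intro x hx
    rw [interior_Icc] at hx
    rw [(gfun_hasDerivAt x (by linarith [hx.1]) (by linarith [hx.2])).deriv]
    have h3 : (0:ℝ) < 1 + 2*x := by linarith [hx.1]
    have h4 : (0:ℝ) < 1 - x := by linarith [hx.2]
    have : (0:ℝ) < ((1 + 2*x)*(1 - x))^2 := by positivity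
    apply div_neg_of_neg_of_pos _ this
    nlinarith [hx.1, hx.2]

lemma gfun_mono : StrictMonoOn gfun (Ico (1/4) 1) := by
  apply strictMonoOn_of_deriv_pos (convex_Ico _ _)
  · intro x hx
    exact (gfun_continuousAt x (by linarith [hx.1]) (by linarith [hx.2])).continuousWithinAt
  · intro x hx
    rw [interior_Ico] at hx
    rw [(gfun_hasDerivAt x (by linarith [hx.1]) (by linarith [hx.2])).deriv]
    have h3 : (0:ℝ) < 1 + 2*x := by linarith [hx.1]
    have h4 : (0:ℝ) < 1 - x := by linarith [hx.2]
    have : (0:ℝ) < ((1 + 2*x)*(1 - x))^2 := by positivity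
    apply div_pos _ this
    nlinarith [hx.1, hx.2]

lemma gfun_neg {x : ℝ} (h1 : 0 < x) (h2 : x ≤ 1/4) : gfun x < 0 := by
  have := gfun_anti (by constructor <;> norm_num : (0:ℝ) ∈ Icc (0:ℝ) (1/4))
    (by constructor <;> linarith : x ∈ Icc (0:ℝ) (1/4)) h1
  rwa [gfun_zero] at this

lemma gfun_tendsto_zero : Tendsto gfun (nhdsWithin 0 (Ioi 0)) (nhds 0) := by
  have := (gfun_continuousAt 0 (by norm_num) (by norm_num)).tendsto
  rw [gfun_zero] at this
  exact this.mono_left nhdsWithin_le_nhds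

lemma gfun_lower {x : ℝ} (h1 : 2/3 < x) (h2 : x < 1) :
    (2/3 - 2*Real.sqrt 3 * Real.sqrt (1-x))/(1-x) ≤ gfun x := by
  set u := 1 - x with hu
  have hu0 : 0 < u := by simp [hu]; linarith
  have h3 : (0:ℝ) < 1 + 2*x := by linarith
  have hle3 : 1 + 2*x ≤ 3 := by linarith
  have hz : (0:ℝ) < (1 + 2*x)/u := by positivity
  -- log bound
  have hlog : Real.log ((1 + 2*x)/u) ≤ 2*Real.sqrt 3 / Real.sqrt u := by
    have hs := Real.log_le_sub_one_of_pos (Real.sqrt_pos.mpr hz)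
    have hls : Real.log ((1+2*x)/u) = 2 * Real.log (Real.sqrt ((1+2*x)/u)) := by
      rw [Real.log_sqrt hz.le]; ring
    have hsq : Real.sqrt ((1+2*x)/u) ≤ Real.sqrt 3 / Real.sqrt u := by
      rw [← Real.sqrt_div (by norm_num : (0:ℝ) ≤ 3)]
      exact Real.sqrt_le_sqrt (by gcongr)
    calc Real.log ((1+2*x)/u) = 2 * Real.log (Real.sqrt ((1+2*x)/u)) := hls
      _ ≤ 2 * (Real.sqrt ((1+2*x)/u) - 1) := by linarith
      _ ≤ 2 * Real.sqrt ((1+2*x)/u) := by linarith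
      _ ≤ 2 * (Real.sqrt 3 / Real.sqrt u) := by linarith
      _ = 2*Real.sqrt 3 / Real.sqrt u := by ring
  -- main term bound
  have hmain : (2/3)/u ≤ 3*x/((1 + 2*x)*u) := by
    rw [div_le_div_iff₀ hu0 (by positivity)]
    nlinarith
  have hss : Real.sqrt u * Real.sqrt u = u := Real.mul_self_sqrt hu0.le
  have hrw : 2*Real.sqrt 3 / Real.sqrt u = 2*Real.sqrt 3 * Real.sqrt u / u := by
    rw [div_eq_div_iff (Real.sqrt_pos.mpr hu0).ne' hu0.ne']
    linear_combination (-2*Real.sqrt 3) * hss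
  have hgx : gfun x = 3*x/((1 + 2*x)*u) - Real.log ((1 + 2*x)/u) := by rw [gfun]
  rw [hgx, sub_div]
  exact sub_le_sub hmain (hlog.trans_eq hrw)

lemma gfun_tendsto_atTop : Tendsto gfun (nhdsWithin 1 (Iio 1)) atTop := by
  have hF : Tendsto (fun u : ℝ => (2/3 - 2*Real.sqrt 3 * Real.sqrt u) * u⁻¹)
      (nhdsWithin 0 (Ioi 0)) atTop := by
    apply Filter.Tendsto.pos_mul_atTop (by norm_num : (0:ℝ) < 2/3) _ tendsto_inv_nhdsGT_zero
    have hc : Continuous fun u : ℝ => 2/3 - 2*Real.sqrt 3 * Real.sqrt u := by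
      continuity
    have := hc.tendsto 0
    simp only [Real.sqrt_zero, mul_zero, sub_zero] at this
    exact this.mono_left nhdsWithin_le_nhds
  have hcomp : Tendsto (fun x : ℝ => 1 - x) (nhdsWithin 1 (Iio 1)) (nhdsWithin 0 (Ioi 0)) := by
    apply tendsto_nhdsWithin_of_tendsto_nhds_of_eventually_within
    · have : Tendsto (fun x : ℝ => 1 - x) (nhds 1) (nhds 0) := by
        have hc : Continuous fun x : ℝ => 1 - x := by continuity
        have := hc.tendsto (1:ℝ)
        simpa using this
      exact this.mono_left nhdsWithin_le_nhds
    · filter_upwards [self_mem_nhdsWithin] with x hx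
      simp only [mem_Iio] at hx
      simp only [mem_Ioi]
      linarith
  apply tendsto_atTop_mono' _ _ (hF.comp hcomp)
  filter_upwards [Ioo_mem_nhdsLT_of_mem (by norm_num : (1:ℝ) ∈ Ioc (2/3:ℝ) 1)] with x hx
  have := gfun_lower hx.1 hx.2
  simpa [Function.comp, div_eq_mul_inv] using this

lemma gfun_root_loc : ∀ s : ℝ, s ∈ Ioo (0:ℝ) 1 → gfun s = 0 → s ∈ Ioo (1/4:ℝ) 1 := by
  intro s hs h0
  refine ⟨?_, hs.2⟩
  by_contra hle
  push_neg at hle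
  exact absurd h0 (gfun_neg hs.1 hle).ne

/-- The function `g(x) = 3x/((1+2x)(1-x)) - log((1+2x)/(1-x))` characterizing
the crossing temperature: its derivative vanishes on (0,1) exactly at 1/4, it
is strictly decreasing on (0,1/4) and strictly increasing on (1/4,1), tends to
0 at 0⁺ and to +∞ at 1⁻, and has a unique root s ∈ (0,1), with s ∈ (1/4,1). -/
theorem crossing_function_properties :
    let g : ℝ → ℝ := fun x =>
      3*x/((1 + 2*x)*(1 - x)) - Real.log ((1 + 2*x)/(1 - x))
    (∀ x ∈ Set.Ioo (0:ℝ) 1, deriv g x = 0 ↔ x = 1/4) ∧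
    StrictAntiOn g (Set.Ioo 0 (1/4)) ∧
    StrictMonoOn g (Set.Ioo (1/4) 1) ∧
    Filter.Tendsto g (nhdsWithin 0 (Set.Ioi 0)) (nhds 0) ∧
    Filter.Tendsto g (nhdsWithin 1 (Set.Iio 1)) Filter.atTop ∧
    (∃! s : ℝ, s ∈ Set.Ioo (0:ℝ) 1 ∧ g s = 0) ∧
    ∀ s : ℝ, s ∈ Set.Ioo (0:ℝ) 1 → g s = 0 → s ∈ Set.Ioo (1/4:ℝ) 1 := by
  intro g
  have hg : g = gfun := rfl
  rw [hg]
  refine ⟨?_, gfun_anti.mono (Ioo_subset_Icc_self),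
    gfun_mono.mono (Ioo_subset_Ico_self), gfun_tendsto_zero, gfun_tendsto_atTop,
    ?_, gfun_root_loc⟩
  · intro x hx
    rw [(gfun_hasDerivAt x (by linarith [hx.1]) hx.2).deriv]
    have hD2 : ((1 + 2*x)*(1 - x))^2 ≠ 0 := by
      have h3 : (0:ℝ) < 1 + 2*x := by linarith [hx.1]
      have h4 : (0:ℝ) < 1 - x := hx.2 |> sub_pos.mpr
      positivity
    rw [div_eq_zero_iff]
    constructor
    · rintro (h | h)
      · rcases mul_eq_zero.mp h with h' | h'
        · exfalso; have := hx.1; nlinarith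
        · linarith
      · exact absurd h hD2
    · intro h
      left; rw [h]; ring
  · -- existence and uniqueness of root
    have hev : ∀ᶠ x in nhdsWithin (1:ℝ) (Iio 1), 0 < gfun x ∧ x ∈ Ioo (1/4:ℝ) 1 := by
      filter_upwards [gfun_tendsto_atTop.eventually_gt_atTop 0,
        Ioo_mem_nhdsLT_of_mem (by norm_num : (1:ℝ) ∈ Ioc (1/4:ℝ) 1)] with x h1 h2
      exact ⟨h1, h2⟩
    obtain ⟨b, hb0, hb⟩ := hev.exists
    have hcont : ContinuousOn gfun (Icc (1/4:ℝ) b) := by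
      intro y hy
      exact (gfun_continuousAt y (by linarith [hy.1]) (by linarith [hy.2, hb.2])).continuousWithinAt
    have h0mem : (0:ℝ) ∈ Ioo (gfun (1/4)) (gfun b) :=
      ⟨gfun_neg (by norm_num) le_rfl, hb0⟩
    obtain ⟨s, hs, hgs⟩ := intermediate_value_Ioo hb.1.le hcont h0mem
    refine ⟨s, ⟨⟨by linarith [hs.1], by linarith [hs.2, hb.2]⟩, hgs⟩, ?_⟩
    intro t ⟨ht, hgt⟩
    have hts := gfun_root_loc t ht hgt
    have hss : s ∈ Ioo (1/4:ℝ) 1 := ⟨hs.1, by linarith [hs.2, hb.2]⟩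
    exact gfun_mono.injOn ⟨hts.1.le, hts.2⟩ ⟨hss.1.le, hss.2⟩ (hgt.trans hgs.symm)
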